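/- For each i,j, let k̃_{ij}(γ) = exp(−γ‖X_i − X_j‖²) and define the centered kernel k_{ij}(γ) = k̃_{ij} − T⁻¹∑_l k̃_{il} − T⁻¹∑_l k̃_{lj} + T⁻²∑_{l,m} k̃_{lm}. If the rows X_1, …, X_T ∈ ℝ^N satisfy ∑_l X_l = 0, then lim_{γ→0} (2γ)⁻¹ k_{ij}(γ) = X_i'X_j for all i, j. -/

import Mathlib

open Filter

/-- For centered data, the centered RBF kernel, rescaled by `(2γ)⁻¹`, converges to the
linear kernel `X_i'X_j` as `γ → 0⁺`. -/
theorem rbf_kernel_limit (T N : ℕ) (X : Fin T → EuclideanSpace ℝ (Fin N))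
    (hcenter : ∑ l, X l = 0) (i j : Fin T) :
    let ktil : ℝ → Fin T → Fin T → ℝ := fun γ a b => Real.exp (-γ * ‖X a - X b‖ ^ 2)
    let kc : ℝ → ℝ := fun γ =>
      ktil γ i j - (T : ℝ)⁻¹ * ∑ l, ktil γ i l - (T : ℝ)⁻¹ * ∑ l, ktil γ l j
        + ((T : ℝ) ^ 2)⁻¹ * ∑ l, ∑ m, ktil γ l m
    Tendsto (fun γ => (2 * γ)⁻¹ * kc γ) (nhdsWithin 0 (Set.Ioi 0))
      (nhds (inner ℝ (X i) (X j) : ℝ)) := by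
  intro ktil kc
  have hT : (T : ℝ) ≠ 0 := by
    have : T ≠ 0 := by rintro rfl; exact i.elim0
    exact_mod_cast this
  set d : Fin T → Fin T → ℝ := fun a b => ‖X a - X b‖ ^ 2 with hd
  have hexp : ∀ a b, HasDerivAt (fun γ : ℝ => ktil γ a b) (-(d a b)) 0 := by
    intro a b
    have h1 : HasDerivAt (fun γ : ℝ => -γ * d a b) (-(d a b)) 0 := by
      simpa using ((hasDerivAt_id (0 : ℝ)).neg.mul_const (d a b))
    have h2 := h1.exp
    have he : (fun γ : ℝ => ktil γ a b) = fun γ : ℝ => Real.exp (-γ * d a b) := rfl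
    rw [he]
    simpa [neg_mul] using h2
  have hsum1 : ∀ a, ∑ l, (inner ℝ (X a) (X l) : ℝ) = 0 := by
    intro a; rw [← inner_sum, hcenter, inner_zero_right]
  have hsum2 : ∀ b, ∑ l, (inner ℝ (X l) (X b) : ℝ) = 0 := by
    intro b; rw [← sum_inner, hcenter, inner_zero_left]
  have hderiv : HasDerivAt kc
      (-(d i j) - (T : ℝ)⁻¹ * ∑ l, -(d i l) - (T : ℝ)⁻¹ * ∑ l, -(d l j)
        + ((T : ℝ) ^ 2)⁻¹ * ∑ l, ∑ m, -(d l m)) 0 := by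
    exact (((hexp i j).sub
      ((HasDerivAt.fun_sum fun l _ => hexp i l).const_mul _)).sub
      ((HasDerivAt.fun_sum fun l _ => hexp l j).const_mul _)).add
      ((HasDerivAt.fun_sum fun l _ => HasDerivAt.fun_sum fun m _ => hexp l m).const_mul _)
  have hdexp : ∀ a b, d a b = ‖X a‖ ^ 2 - 2 * (inner ℝ (X a) (X b) : ℝ) + ‖X b‖ ^ 2 := by
    intro a b; simp [hd, norm_sub_sq_real]
  have hA : ∀ a, ∑ l, d a l = (T : ℝ) * ‖X a‖ ^ 2 + ∑ l, ‖X l‖ ^ 2 := by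
    intro a
    calc ∑ l, d a l
        = (∑ _l : Fin T, ‖X a‖ ^ 2) - 2 * ∑ l, (inner ℝ (X a) (X l) : ℝ) + ∑ l, ‖X l‖ ^ 2 := by
          simp only [hdexp]
          rw [Finset.sum_add_distrib, Finset.sum_sub_distrib, Finset.mul_sum]
      _ = (T : ℝ) * ‖X a‖ ^ 2 + ∑ l, ‖X l‖ ^ 2 := by
          rw [hsum1, Finset.sum_const, Finset.card_univ, Fintype.card_fin, nsmul_eq_mul]; ring
  have hB : ∀ b, ∑ l, d l b = (∑ l, ‖X l‖ ^ 2) + (T : ℝ) * ‖X b‖ ^ 2 := by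
    intro b
    calc ∑ l, d l b
        = (∑ l, ‖X l‖ ^ 2) - 2 * ∑ l, (inner ℝ (X l) (X b) : ℝ) + ∑ _l : Fin T, ‖X b‖ ^ 2 := by
          simp only [hdexp]
          rw [Finset.sum_add_distrib, Finset.sum_sub_distrib, Finset.mul_sum]
      _ = (∑ l, ‖X l‖ ^ 2) + (T : ℝ) * ‖X b‖ ^ 2 := by
          rw [hsum2, Finset.sum_const, Finset.card_univ, Fintype.card_fin, nsmul_eq_mul]; ring
  have hC : ∑ l, ∑ m, d l m = 2 * (T : ℝ) * ∑ l, ‖X l‖ ^ 2 := by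
    calc ∑ l, ∑ m, d l m
        = ∑ l, ((T : ℝ) * ‖X l‖ ^ 2 + ∑ m, ‖X m‖ ^ 2) :=
          Finset.sum_congr rfl fun l _ => hA l
      _ = 2 * (T : ℝ) * ∑ l, ‖X l‖ ^ 2 := by
          rw [Finset.sum_add_distrib, ← Finset.mul_sum, Finset.sum_const, Finset.card_univ,
            Fintype.card_fin, nsmul_eq_mul]
          ring
  have hDval : (-(d i j) - (T : ℝ)⁻¹ * ∑ l, -(d i l) - (T : ℝ)⁻¹ * ∑ l, -(d l j)
        + ((T : ℝ) ^ 2)⁻¹ * ∑ l, ∑ m, -(d l m)) = 2 * (inner ℝ (X i) (X j) : ℝ) := by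
    have hneg : ∀ (f : Fin T → ℝ), ∑ l, -(f l) = -∑ l, f l := fun f => by
      rw [← Finset.sum_neg_distrib]
    rw [show (∑ l, ∑ m, -(d l m)) = -∑ l, ∑ m, d l m by
      rw [← Finset.sum_neg_distrib]; exact Finset.sum_congr rfl fun l _ => hneg _]
    rw [hneg fun l => d i l, hneg fun l => d l j, hA i, hB j, hC, hdexp i j]
    field_simp
    ring
  rw [hDval] at hderiv
  have hkc0 : kc 0 = 0 := by
    simp only [kc, ktil, zero_mul, neg_zero, Real.exp_zero, Finset.sum_const, Finset.card_univ,
      Fintype.card_fin, nsmul_eq_mul, mul_one]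
    field_simp
    ring
  have h1 : Tendsto (slope kc 0) (nhdsWithin 0 {(0 : ℝ)}ᶜ)
      (nhds (2 * (inner ℝ (X i) (X j) : ℝ))) := hasDerivAt_iff_tendsto_slope.mp hderiv
  have h2 : Tendsto (slope kc 0) (nhdsWithin 0 (Set.Ioi 0))
      (nhds (2 * (inner ℝ (X i) (X j) : ℝ))) :=
    h1.mono_left (nhdsWithin_mono 0 (fun x hx => ne_of_gt hx))
  have h3 := h2.const_mul (2⁻¹ : ℝ)
  have heq : (fun γ : ℝ => (2⁻¹ : ℝ) * slope kc 0 γ) = fun γ => (2 * γ)⁻¹ * kc γ := by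
    funext γ
    rw [slope_def_field, hkc0, mul_inv]
    ring
  rw [heq] at h3
  convert h3 using 2
  ring
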